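/- arXiv:1606.00909 — 4 statements merged into one kernel-verified Lean document; each statement's English description precedes it below -/
import Mathlib

section
/- Hardy's Lemma: Let x₁, x₂ be nonnegative Lebesgue measurable functions on [0, γ) with 0 < γ ≤ ∞, such that ∫₀ᵗ x₁ ≤ ∫₀ᵗ x₂ for all t ∈ [0, γ). Then for any nonnegative decreasing (non-increasing) function y on [0, γ), we have ∫₀^γ x₁·y ≤ ∫₀^γ x₂·y. -/
open MeasureTheory Set ENNReal Filter

/-- Key lemma: integral comparison over downward-closed subsets of [0,γ). -/
lemma hardy_key (γ : ℝ≥0∞) (x₁ x₂ : ℝ → ℝ≥0∞)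
    (hx₁ : Measurable x₁)
    (h : ∀ t : ℝ, 0 ≤ t → ENNReal.ofReal t < γ →
      ∫⁻ s in Set.Ico (0:ℝ) t, x₁ s ≤ ∫⁻ s in Set.Ico (0:ℝ) t, x₂ s)
    (A : Set ℝ)
    (hAD : A ⊆ {s : ℝ | 0 ≤ s ∧ ENNReal.ofReal s < γ})
    (hlow : ∀ s ∈ A, ∀ s' : ℝ, 0 ≤ s' → s' ≤ s → s' ∈ A) :
    ∫⁻ s in A, x₁ s ≤ ∫⁻ s in A, x₂ s := by
  classical
  set S : Set ℚ := {q : ℚ | (q : ℝ) ∈ A} with hS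
  set U : Set ℝ := ⋃ q : S, Ico (0:ℝ) (q:ℝ) with hU
  -- A \ U is a subsingleton
  have hsub : (A \ U).Subsingleton := by
    have key : ∀ a ∈ A \ U, ∀ b ∈ A \ U, a < b → False := by
      intro a ha b hb hab
      obtain ⟨q, hq1, hq2⟩ := exists_rat_btwn hab
      have ha0 : (0:ℝ) ≤ a := (hAD ha.1).1
      have hqA : (q : ℝ) ∈ A := hlow b hb.1 q (ha0.trans hq1.le) hq2.le
      exact ha.2 (mem_iUnion.2 ⟨⟨q, hqA⟩, ⟨ha0, hq1⟩⟩)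
    intro a ha b hb
    rcases lt_trichotomy a b with hlt | heq | hgt
    · exact absurd (key a ha b hb hlt) not_false
    · exact heq
    · exact absurd (key b hb a ha hgt) not_false
  have hnull : volume (A \ U) = 0 := hsub.measure_zero _
  have h1 : ∫⁻ s in A, x₁ s ≤ ∫⁻ s in U, x₁ s := by
    have hae : A =ᵐ[volume] (A ∩ U : Set ℝ) := by
      refine (MeasureTheory.ae_eq_set.2 ⟨?_, ?_⟩)
      · rw [Set.diff_self_inter]; exact hnull
      · rw [Set.diff_eq_empty.2 Set.inter_subset_left]; simp
    calc ∫⁻ s in A, x₁ s = ∫⁻ s in A ∩ U, x₁ s := setLIntegral_congr hae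
      _ ≤ ∫⁻ s in U, x₁ s := lintegral_mono_set Set.inter_subset_right
  -- lintegral over U as a directed supremum
  have h2 : ∫⁻ s in U, x₁ s = ⨆ q : S, ∫⁻ s in Ico (0:ℝ) (q:ℝ), x₁ s := by
    have hmeas : ∀ q : S, AEMeasurable ((Ico (0:ℝ) (q:ℝ)).indicator x₁) volume := by
      intro q
      exact (hx₁.indicator measurableSet_Ico).aemeasurable
    have hdir : Directed (· ≤ ·) fun q : S => (Ico (0:ℝ) (q:ℝ)).indicator x₁ := by
      intro q r
      rcases le_total (q:ℚ) (r:ℚ) with hqr | hqr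
      · exact ⟨r, Set.indicator_le_indicator_of_subset
          (Ico_subset_Ico_right (by exact_mod_cast hqr)) (fun _ => zero_le),
          le_refl _⟩
      · exact ⟨q, le_refl _, Set.indicator_le_indicator_of_subset
          (Ico_subset_Ico_right (by exact_mod_cast hqr)) (fun _ => zero_le)⟩
    calc ∫⁻ s in U, x₁ s = ∫⁻ s, U.indicator x₁ s := by
          rw [lintegral_indicator]
          exact MeasurableSet.iUnion (fun q => measurableSet_Ico)
      _ = ∫⁻ s, ⨆ q : S, (Ico (0:ℝ) (q:ℝ)).indicator x₁ s := by
          congr 1; funext s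
          rw [hU, Set.indicator_iUnion_apply (M := ℝ≥0∞) rfl]
      _ = ⨆ q : S, ∫⁻ s, (Ico (0:ℝ) (q:ℝ)).indicator x₁ s :=
          lintegral_iSup_directed hmeas hdir
      _ = ⨆ q : S, ∫⁻ s in Ico (0:ℝ) (q:ℝ), x₁ s := by
          congr 1; funext q; rw [lintegral_indicator measurableSet_Ico]
  rw [h2] at h1
  refine h1.trans (iSup_le fun q => ?_)
  have hqA : (q:ℝ) ∈ A := q.2
  have hq0 : (0:ℝ) ≤ (q:ℝ) := (hAD hqA).1
  have hqγ : ENNReal.ofReal (q:ℝ) < γ := (hAD hqA).2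
  refine (h q hq0 hqγ).trans (lintegral_mono_set fun s hs => ?_)
  exact hlow _ hqA s hs.1 hs.2.le

lemma vol_aux (a : ℝ≥0∞) : volume ({t : ℝ | ENNReal.ofReal t < a} ∩ Ioi 0) = a := by
  rcases eq_or_ne a ∞ with rfl | ha
  · have : ({t : ℝ | ENNReal.ofReal t < ∞} ∩ Ioi 0) = Ioi (0:ℝ) := by
      ext t; simp [ENNReal.ofReal_lt_top]
    rw [this, Real.volume_Ioi]
  · have : ({t : ℝ | ENNReal.ofReal t < a} ∩ Ioi 0) = Ioo (0:ℝ) a.toReal := by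
      ext t
      constructor
      · rintro ⟨h1, h2⟩
        exact ⟨h2, (ENNReal.ofReal_lt_iff_lt_toReal (le_of_lt h2) ha).1 h1⟩
      · rintro ⟨h1, h2⟩
        exact ⟨(ENNReal.ofReal_lt_iff_lt_toReal h1.le ha).2 h2, h1⟩
    rw [this, Real.volume_Ioo, sub_zero, ENNReal.ofReal_toReal ha]

/-- Hardy's Lemma on [0, γ), 0 < γ ≤ ∞. Nonnegative measurable functions are modeled
as `ℝ≥0∞`-valued functions. -/
theorem hardy_lemma (γ : ℝ≥0∞) (hγ : 0 < γ)
    (x₁ x₂ y : ℝ → ℝ≥0∞)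
    (hx₁ : Measurable x₁) (hx₂ : Measurable x₂)
    (hy : AntitoneOn y {s : ℝ | 0 ≤ s ∧ ENNReal.ofReal s < γ})
    (h : ∀ t : ℝ, 0 ≤ t → ENNReal.ofReal t < γ →
      ∫⁻ s in Set.Ico (0:ℝ) t, x₁ s ≤ ∫⁻ s in Set.Ico (0:ℝ) t, x₂ s) :
    ∫⁻ s in {s : ℝ | 0 ≤ s ∧ ENNReal.ofReal s < γ}, x₁ s * y s
      ≤ ∫⁻ s in {s : ℝ | 0 ≤ s ∧ ENNReal.ofReal s < γ}, x₂ s * y s := by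
  classical
  set D : Set ℝ := {s : ℝ | 0 ≤ s ∧ ENNReal.ofReal s < γ} with hD
  have hDmeas : MeasurableSet D := by
    have : D = Ici (0:ℝ) ∩ (ENNReal.ofReal ⁻¹' Iio γ) := by
      ext s; simp [hD, Set.mem_setOf_eq]
    rw [this]
    exact measurableSet_Ici.inter (ENNReal.measurable_ofReal measurableSet_Iio)
  -- extend y to a globally antitone function Y
  set Y : ℝ → ℝ≥0∞ := fun s => if s < 0 then ∞ else if ENNReal.ofReal s < γ then y s else 0
    with hYdef
  have hYeq : ∀ s ∈ D, Y s = y s := by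
    intro s hs
    simp only [hYdef, if_neg (not_lt.2 hs.1), if_pos hs.2]
  have hYanti : Antitone Y := by
    intro s t hst
    by_cases ht0 : t < 0
    · have hs0 : s < 0 := lt_of_le_of_lt hst ht0
      simp [hYdef, hs0, ht0]
    · by_cases hs0 : s < 0
      · simp only [hYdef, if_pos hs0]; exact le_top
      · push_neg at hs0 ht0
        by_cases htγ : ENNReal.ofReal t < γ
        · have hsγ : ENNReal.ofReal s < γ :=
            lt_of_le_of_lt (ENNReal.ofReal_le_ofReal hst) htγ
          simp only [hYdef, if_neg (not_lt.2 hs0), if_neg (not_lt.2 ht0), if_pos htγ,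
            if_pos hsγ]
          exact hy ⟨hs0, hsγ⟩ ⟨ht0, htγ⟩ hst
        · simp only [hYdef, if_neg (not_lt.2 ht0), if_neg htγ]
          exact zero_le
  have hYmeas : Measurable Y := hYanti.measurable
  -- replace y by Y in the integrands
  have hcong : ∀ x : ℝ → ℝ≥0∞,
      ∫⁻ s in D, x s * y s = ∫⁻ s in D, x s * Y s := by
    intro x
    refine setLIntegral_congr_fun hDmeas (fun s hs => ?_)
    simp only [hYeq s hs]
  rw [hcong x₁, hcong x₂]
  -- layer cake representation
  have hlayer : ∀ (x : ℝ → ℝ≥0∞), Measurable x →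
      ∫⁻ s in D, x s * Y s
        = ∫⁻ t in Ioi (0:ℝ), ∫⁻ s in D, (if ENNReal.ofReal t < Y s then x s else 0) := by
    intro x hx
    have hpt : ∀ s : ℝ, x s * Y s
        = ∫⁻ t in Ioi (0:ℝ), (if ENNReal.ofReal t < Y s then x s else 0) := by
      intro s
      have : (fun t : ℝ => if ENNReal.ofReal t < Y s then x s else 0)
          = ({t : ℝ | ENNReal.ofReal t < Y s}).indicator (fun _ => x s) := by
        funext t
        by_cases hts : ENNReal.ofReal t < Y s
        · simp [Set.indicator_apply, hts]
        · simp [Set.indicator_apply, hts]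
      rw [this, lintegral_indicator_const₀]
      · rw [Measure.restrict_apply₀]
        · rw [vol_aux (Y s), mul_comm]
        · exact (measurableSet_lt (by measurability) measurable_const).nullMeasurableSet
      · exact ((measurableSet_lt (by measurability) measurable_const).nullMeasurableSet)
    calc ∫⁻ s in D, x s * Y s
        = ∫⁻ s in D, ∫⁻ t in Ioi (0:ℝ), (if ENNReal.ofReal t < Y s then x s else 0) := by
          congr 1; funext s; exact hpt s
      _ = ∫⁻ t in Ioi (0:ℝ), ∫⁻ s in D, (if ENNReal.ofReal t < Y s then x s else 0) := by
          apply lintegral_lintegral_swap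
          apply Measurable.aemeasurable
          have hset : MeasurableSet {p : ℝ × ℝ | ENNReal.ofReal p.2 < Y p.1} :=
            measurableSet_lt (ENNReal.measurable_ofReal.comp measurable_snd)
              (hYmeas.comp measurable_fst)
          exact Measurable.ite hset (hx.comp measurable_fst) measurable_const
  rw [hlayer x₁ hx₁, hlayer x₂ hx₂]
  -- compare inner integrals
  refine lintegral_mono fun t => ?_
  have hrw : ∀ x : ℝ → ℝ≥0∞,
      ∫⁻ s in D, (if ENNReal.ofReal t < Y s then x s else 0)
        = ∫⁻ s in D ∩ {s : ℝ | ENNReal.ofReal t < Y s}, x s := by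
    intro x
    have : (fun s => if ENNReal.ofReal t < Y s then x s else 0)
        = ({s : ℝ | ENNReal.ofReal t < Y s}).indicator x := by
      funext s
      by_cases hts : ENNReal.ofReal t < Y s
      · simp [Set.indicator_apply, hts]
      · simp [Set.indicator_apply, hts]
    rw [this, lintegral_indicator (measurableSet_lt measurable_const hYmeas),
      Measure.restrict_restrict (measurableSet_lt measurable_const hYmeas), Set.inter_comm]
  rw [hrw x₁, hrw x₂]
  apply hardy_key γ x₁ x₂ hx₁ h
  · intro s hs; exact hs.1
  · rintro s ⟨⟨hs0, hsγ⟩, hsY⟩ s' hs'0 hs's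
    refine ⟨⟨hs'0, lt_of_le_of_lt (ENNReal.ofReal_le_ofReal hs's) hsγ⟩, ?_⟩
    exact lt_of_lt_of_le hsY (hYanti hs's)
end

section
/- For any measurable function x on I = [0, γ), any nonnegative decreasing function y on I, and any measurable set A ⊆ I, the inequality ∫₀^γ (x·χ_A)* · y ≤ ∫₀^{m(A)} x* · y holds, where f* denotes the decreasing rearrangement of f and m is Lebesgue measure. -/
open MeasureTheory Set ENNReal

/-- The interval `[0, γ)` for `0 < γ ≤ ∞`, as a subset of `ℝ`. -/
def Iset (γ : ℝ≥0∞) : Set ℝ := {s : ℝ | 0 ≤ s ∧ ENNReal.ofReal s < γ}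

/-- The decreasing rearrangement of `f` with respect to the measure `μ`:
`f*(t) = inf {λ ≥ 0 : μ{s : |f s| > λ} ≤ t}`, valued in `[0,∞]`. -/
noncomputable def decRearr (μ : Measure ℝ) (f : ℝ → ℝ) (t : ℝ) : ℝ≥0∞ :=
  sInf {l : ℝ≥0∞ | μ {s : ℝ | l < ENNReal.ofReal |f s|} ≤ ENNReal.ofReal t}

lemma measurableSet_Iset (γ : ℝ≥0∞) : MeasurableSet (Iset γ) := by
  have : Iset γ = Ici 0 ∩ {s : ℝ | ENNReal.ofReal s < γ} := by
    ext s; simp [Iset, and_comm]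
  rw [this]
  exact measurableSet_Ici.inter
    (measurableSet_lt (ENNReal.measurable_ofReal) measurable_const)

lemma volume_Iset (γ : ℝ≥0∞) : volume (Iset γ) = γ := by
  by_cases hγ : γ = ⊤
  · have : Iset γ = Ici 0 := by
      ext s; simp [Iset, hγ, ENNReal.ofReal_lt_top]
    rw [this, hγ]
    simp
  · have : Iset γ = Ico 0 γ.toReal := by
      ext s
      simp only [Iset, mem_setOf_eq, mem_Ico]
      constructor
      · rintro ⟨h0, hlt⟩
        exact ⟨h0, (ENNReal.ofReal_lt_iff_lt_toReal h0 hγ).mp hlt⟩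
      · rintro ⟨h0, hlt⟩
        exact ⟨h0, (ENNReal.ofReal_lt_iff_lt_toReal h0 hγ).mpr hlt⟩
    rw [this, Real.volume_Ico, sub_zero, ENNReal.ofReal_toReal hγ]

lemma Iset_mono {a b : ℝ≥0∞} (h : a ≤ b) : Iset a ⊆ Iset b :=
  fun s hs => ⟨hs.1, lt_of_lt_of_le hs.2 h⟩

/-- For measurable `x` on `I = [0,γ)`, a nonnegative decreasing `y` on `I`, and a
measurable `A ⊆ I`, we have `∫₀^γ (x χ_A)* y ≤ ∫₀^{m(A)} x* y`. -/
theorem rearr_indicator_integral_le (γ : ℝ≥0∞) (hγ : 0 < γ)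
    (x : ℝ → ℝ) (hx : Measurable x)
    (y : ℝ → ℝ≥0∞) (hy : AntitoneOn y (Iset γ))
    (A : Set ℝ) (hA : MeasurableSet A) (hAI : A ⊆ Iset γ) :
    ∫⁻ t in Iset γ, decRearr (volume.restrict (Iset γ)) (A.indicator x) t * y t
      ≤ ∫⁻ t in Iset (volume A), decRearr (volume.restrict (Iset γ)) x t * y t := by
  set μ := volume.restrict (Iset γ) with hμ
  set S := Iset (volume A) with hS
  have hAle : volume A ≤ γ := by
    calc volume A ≤ volume (Iset γ) := measure_mono hAI
    _ = γ := volume_Iset γ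
  have hsub : S ⊆ Iset γ := Iset_mono hAle
  have hSmeas : MeasurableSet S := measurableSet_Iset _
  have key : ∀ t ∈ Iset γ,
      decRearr μ (A.indicator x) t * y t
        ≤ S.indicator (fun t => decRearr μ x t * y t) t := by
    intro t ht
    by_cases htS : t ∈ S
    · rw [Set.indicator_of_mem htS]
      refine mul_le_mul_left ?_ (y t)
      apply sInf_le_sInf
      intro l hl
      refine le_trans (measure_mono ?_) hl
      intro s hs
      simp only [mem_setOf_eq] at hs ⊢
      refine lt_of_lt_of_le hs (ENNReal.ofReal_le_ofReal ?_)
      by_cases hsA : s ∈ A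
      · rw [Set.indicator_of_mem hsA]
      · rw [Set.indicator_of_notMem hsA]; simp [abs_nonneg]
    · rw [Set.indicator_of_notMem htS]
      have h0 : decRearr μ (A.indicator x) t = 0 := by
        refine le_antisymm (sInf_le ?_) (zero_le (a := _))
        simp only [mem_setOf_eq]
        have hsubA : {s : ℝ | (0 : ℝ≥0∞) < ENNReal.ofReal |A.indicator x s|} ⊆ A := by
          intro s hs
          by_contra hsA
          simp [Set.indicator_of_notMem hsA] at hs
          exact hsA hs.1
        have hvA : volume A ≤ ENNReal.ofReal t := by
          by_contra hcon
          exact htS ⟨ht.1, lt_of_not_ge hcon⟩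
        calc μ {s : ℝ | (0 : ℝ≥0∞) < ENNReal.ofReal |A.indicator x s|}
            ≤ μ A := measure_mono hsubA
          _ = volume (A ∩ Iset γ) := Measure.restrict_apply hA
          _ = volume A := by rw [inter_eq_left.mpr hAI]
          _ ≤ ENNReal.ofReal t := hvA
      rw [h0, zero_mul]
  calc ∫⁻ t in Iset γ, decRearr μ (A.indicator x) t * y t
      ≤ ∫⁻ t in Iset γ, S.indicator (fun t => decRearr μ x t * y t) t :=
        setLIntegral_mono' (measurableSet_Iset γ) key
    _ = ∫⁻ t in S, decRearr μ x t * y t := by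
        rw [lintegral_indicator hSmeas, Measure.restrict_restrict hSmeas,
          inter_eq_left.mpr hsub]
end

section
/- Let φ be an Orlicz function with φ(tₙ) → 0 along a sequence tₙ → 0, and let w be a positive decreasing weight sequence with w(1) ≤ 1 and W(∞) = ∑ w(k) = ∞. Then there exist a subsequence (n_j) and natural numbers (m_j) with m_j ≥ j+1 such that 1/2ʲ ≤ φ(t_{n_j})·W(m_j) ≤ 1/2^{j−2} for all j, where W(m) = ∑_{k=1}^m w(k). -/
open Filter Finset

/-- If `φ(tₙ) → 0` along `tₙ → 0` and `w` is a positive decreasing weight sequence with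
first term `≤ 1` and divergent sum, then there are a subsequence `(n_j)` and sizes
`(m_j)` with `m_j ≥ j+1` and `1/2ʲ ≤ φ(t_{n_j}) W(m_j) ≤ 1/2^{j-2}` for all `j ≥ 1`. -/
theorem exists_subseq_weight_bounds (φ : ℝ → ℝ)
    (hconv : ConvexOn ℝ (Set.Ici 0) φ) (h0 : φ 0 = 0)
    (hpos : ∀ u : ℝ, 0 < u → 0 < φ u)
    (t : ℕ → ℝ) (htpos : ∀ n, 0 < t n)
    (ht0 : Tendsto t atTop (nhds 0))
    (hφt0 : Tendsto (fun n => φ (t n)) atTop (nhds 0))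
    (w : ℕ → ℝ) (hwpos : ∀ k, 0 < w k) (hwdec : Antitone w) (hw1 : w 0 ≤ 1)
    (hWinf : ¬ Summable w) :
    ∃ n : ℕ → ℕ, StrictMono n ∧ ∃ m : ℕ → ℕ, ∀ j : ℕ, 1 ≤ j →
      j + 1 ≤ m j ∧
      (2:ℝ) ^ (-(j:ℤ)) ≤ φ (t (n j)) * ∑ k ∈ Finset.range (m j), w k ∧
      φ (t (n j)) * ∑ k ∈ Finset.range (m j), w k ≤ (2:ℝ) ^ (2 - (j:ℤ)) := by
  set W : ℕ → ℝ := fun m => ∑ k ∈ Finset.range m, w k with hW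
  have hWnn : ∀ m, 0 ≤ W m := fun m => Finset.sum_nonneg fun k _ => (hwpos k).le
  have hWmono : Monotone W := by
    intro a b hab
    exact Finset.sum_le_sum_of_subset_of_nonneg (Finset.range_subset_range.2 hab)
      (fun k _ _ => (hwpos k).le)
  have hWtop : Tendsto W atTop atTop :=
    (not_summable_iff_tendsto_nat_atTop_of_nonneg (fun k => (hwpos k).le)).1 hWinf
  -- thresholds
  set δ : ℕ → ℝ := fun j => (2:ℝ) ^ (-(j:ℤ)) / (W (j + 2) + 1) with hδ
  have hδpos : ∀ j, 0 < δ j := fun j =>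
    div_pos (zpow_pos (by norm_num) _) (by linarith [hWnn (j + 2)])
  -- choose subsequence
  have hchoice : ∀ j N : ℕ, ∃ n, N ≤ n ∧ φ (t n) < δ j := by
    intro j N
    have := (hφt0.eventually (gt_mem_nhds (hδpos j))).and (eventually_ge_atTop N)
    rcases this.exists with ⟨n, h1, h2⟩
    exact ⟨n, h2, h1⟩
  let n : ℕ → ℕ := fun j => Nat.rec ((hchoice 0 0).choose)
    (fun j' ih => (hchoice (j' + 1) (ih + 1)).choose) j
  have hnsucc : ∀ j, n j < n (j + 1) ∧ φ (t (n (j + 1))) < δ (j + 1) := by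
    intro j
    have h := (hchoice (j + 1) (n j + 1)).choose_spec
    exact ⟨h.1, h.2⟩
  have hnmono : StrictMono n := strictMono_nat_of_lt_succ fun j => (hnsucc j).1
  have hεpos : ∀ j, 0 < φ (t (n j)) := fun j => hpos _ (htpos _)
  have hexists : ∀ j : ℕ, ∃ m, (2:ℝ) ^ (-(j:ℤ)) ≤ φ (t (n j)) * W m := by
    intro j
    obtain ⟨m, hm⟩ := (hWtop.eventually_ge_atTop ((2:ℝ) ^ (-(j:ℤ)) / φ (t (n j)))).exists
    rw [div_le_iff₀ (hεpos j)] at hm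
    exact ⟨m, by linarith [mul_comm (W m) (φ (t (n j))), hm]⟩
  refine ⟨n, hnmono, fun j => Nat.find (hexists j), ?_⟩
  intro j hj
  obtain ⟨j', rfl⟩ : ∃ j', j = j' + 1 := ⟨j - 1, (Nat.succ_pred_eq_of_pos hj).symm⟩
  set j := j' + 1
  set ε := φ (t (n j)) with hε
  have hεδ : ε < δ j := (hnsucc j').2
  have hspec : (2:ℝ) ^ (-(j:ℤ)) ≤ ε * W (Nat.find (hexists j)) := Nat.find_spec (hexists j)
  have hεsmall : ε < (2:ℝ) ^ (-(j:ℤ)) := by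
    have h1 : (1:ℝ) ≤ W (j + 2) + 1 := by linarith [hWnn (j + 2)]
    calc ε < δ j := hεδ
      _ ≤ (2:ℝ) ^ (-(j:ℤ)) := by
          rw [hδ]
          exact div_le_self (zpow_pos (by norm_num) _).le h1
  -- m j ≥ j + 2
  have hmge : j + 2 ≤ Nat.find (hexists j) := by
    by_contra h
    push_neg at h
    have hle : Nat.find (hexists j) ≤ j + 1 := Nat.lt_succ_iff.mp h
    have : ε * W (Nat.find (hexists j)) ≤ ε * W (j + 1) :=
      mul_le_mul_of_nonneg_left (hWmono hle) (hεpos j).le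
    have h2 : ε * W (j + 1) < (2:ℝ) ^ (-(j:ℤ)) := by
      have hWle : W (j + 1) ≤ W (j + 2) := hWmono (by omega)
      have hWp1 : 0 < W (j + 2) + 1 := by linarith [hWnn (j + 2)]
      calc ε * W (j + 1) ≤ ε * W (j + 2) :=
            mul_le_mul_of_nonneg_left hWle (hεpos j).le
        _ < δ j * (W (j + 2) + 1) := by
            apply mul_lt_mul' hεδ.le (by linarith) (hWnn _) (hδpos j)
        _ = (2:ℝ) ^ (-(j:ℤ)) := by
            rw [hδ]; field_simp
    linarith
  refine ⟨le_trans (Nat.le_succ (j + 1)) hmge, hspec, ?_⟩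
  -- upper bound
  set M := Nat.find (hexists j) with hM
  have hM1 : 1 ≤ M := by omega
  have hmin : ε * W (M - 1) < (2:ℝ) ^ (-(j:ℤ)) := by
    have := Nat.find_min (hexists j) (m := M - 1) (by omega)
    push_neg at this
    exact this
  have hWsucc : W M = W (M - 1) + w (M - 1) := by
    have hMe : M = M - 1 + 1 := by omega
    rw [hMe, hW]
    exact Finset.sum_range_succ w (M - 1)
  have hwle : w (M - 1) ≤ 1 := le_trans (hwdec (Nat.zero_le _)) hw1
  have hεw : ε * w (M - 1) ≤ ε := by
    nlinarith [hεpos j, hwpos (M - 1)]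
  have : ε * W M ≤ (2:ℝ) ^ (-(j:ℤ)) + (2:ℝ) ^ (-(j:ℤ)) := by
    rw [hWsucc, mul_add]
    linarith
  calc ε * W M ≤ (2:ℝ) ^ (-(j:ℤ)) + (2:ℝ) ^ (-(j:ℤ)) := this
    _ ≤ (2:ℝ) ^ (2 - (j:ℤ)) := by
        rw [show (2 : ℤ) - (j:ℤ) = -(j:ℤ) + 2 by ring, zpow_add₀ (by norm_num : (2:ℝ) ≠ 0)]
        have := zpow_pos (show (0:ℝ) < 2 by norm_num) (-(j:ℤ))
        nlinarith
end

section
/- Let φ be an Orlicz function, w a decreasing weight on I = [0,γ), and ρ(x) = ∫₀^γ φ(x*)·w the Orlicz-Lorentz modular. Then ρ is orthogonally subadditive: if x, y are measurable with |x| ∧ |y| = 0 (disjoint supports), then ρ(x + y) ≤ ρ(x) + ρ(y). -/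
open MeasureTheory Set ENNReal

/-- Extension of `φ : ℝ → ℝ` to `[0,∞]`, sending `∞` to `∞`. -/
noncomputable def phie (φ : ℝ → ℝ) (a : ℝ≥0∞) : ℝ≥0∞ :=
  if a = ∞ then ∞ else ENNReal.ofReal (φ a.toReal)

/-- The Orlicz-Lorentz modular `ρ(x) = ∫₀^γ φ(x*) w`. -/
noncomputable def olModular (γ : ℝ≥0∞) (φ w : ℝ → ℝ) (x : ℝ → ℝ) : ℝ≥0∞ :=
  ∫⁻ t in Iset γ, phie φ (decRearr (volume.restrict (Iset γ)) x t) * ENNReal.ofReal (w t)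

namespace OLAux

lemma measurableSet_Iset (c : ℝ≥0∞) : MeasurableSet (Iset c) := by
  have : Iset c = {s : ℝ | 0 ≤ s} ∩ (ENNReal.ofReal ⁻¹' Iio c) := by
    ext s; simp only [Iset, Set.mem_setOf_eq, Set.mem_inter_iff, Set.mem_preimage,
      Set.mem_Iio, Set.mem_Ici]
  rw [this]
  exact measurableSet_Ici.inter (ENNReal.measurable_ofReal measurableSet_Iio)

lemma Iset_eq_Ico {c : ℝ≥0∞} (hc : c ≠ ∞) : Iset c = Set.Ico 0 c.toReal := by
  ext s
  simp only [Iset, Set.mem_setOf_eq, Set.mem_Ico]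
  exact and_congr_right fun hs => ENNReal.ofReal_lt_iff_lt_toReal hs hc

lemma Iset_top : Iset ∞ = Set.Ici 0 := by
  ext s; simp [Iset, ENNReal.ofReal_lt_top]

lemma volume_Iset (c : ℝ≥0∞) : volume (Iset c) = c := by
  rcases eq_or_ne c ∞ with rfl | hc
  · rw [Iset_top]; simp
  · rw [Iset_eq_Ico hc, Real.volume_Ico, sub_zero, ENNReal.ofReal_toReal hc]

lemma Iset_mono {a b : ℝ≥0∞} (h : a ≤ b) : Iset a ⊆ Iset b :=
  fun s hs => ⟨hs.1, lt_of_lt_of_le hs.2 h⟩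

/-- The weight integral `W(a) = ∫_{[0,a)} w`. -/
noncomputable def Wfun (w : ℝ → ℝ) (a : ℝ≥0∞) : ℝ≥0∞ :=
  ∫⁻ t in Iset a, ENNReal.ofReal (w t)

lemma Wfun_mono (w : ℝ → ℝ) {a b : ℝ≥0∞} (h : a ≤ b) : Wfun w a ≤ Wfun w b :=
  lintegral_mono_set (Iset_mono h)

/-- Subadditivity of `W` coming from the monotonicity of `w`. -/
lemma Wfun_subadd {γ : ℝ≥0∞} {w : ℝ → ℝ} (hwdec : AntitoneOn w (Iset γ))
    {a b : ℝ≥0∞} (hab : a + b ≤ γ) : Wfun w (a + b) ≤ Wfun w a + Wfun w b := by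
  rcases eq_or_ne a ∞ with rfl | ha
  · rw [top_add]; exact le_add_right le_rfl
  rcases eq_or_ne b ∞ with rfl | hb
  · rw [add_top]; exact le_add_self
  set α := a.toReal with hα
  set β := b.toReal with hβ
  have hα0 : 0 ≤ α := ENNReal.toReal_nonneg
  have hβ0 : 0 ≤ β := ENNReal.toReal_nonneg
  have habne : a + b ≠ ∞ := by
    simp [ENNReal.add_eq_top, ha, hb]
  have htr : (a + b).toReal = α + β := ENNReal.toReal_add ha hb
  have hsplit : Set.Ico (0:ℝ) (α + β) = Set.Ico 0 α ∪ Set.Ico α (α + β) :=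
    (Set.Ico_union_Ico_eq_Ico hα0 (by linarith)).symm
  have htrans : (∫⁻ t in Set.Ico α (α + β), ENNReal.ofReal (w t))
      = ∫⁻ s in Set.Ico (0:ℝ) β, ENNReal.ofReal (w (α + s)) := by
    have hmp : MeasurePreserving (fun s : ℝ => α + s) volume volume :=
      measurePreserving_add_left volume α
    have hemb : MeasurableEmbedding (fun s : ℝ => α + s) :=
      (MeasurableEquiv.addLeft α).measurableEmbedding
    have himg : (fun s : ℝ => α + s) '' Set.Ico 0 β = Set.Ico α (α + β) := by
      rw [Set.image_const_add_Ico, add_zero]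
    rw [← himg, ← MeasurePreserving.setLIntegral_comp_emb hmp hemb
      (fun t => ENNReal.ofReal (w t)) (Set.Ico 0 β)]
  have hbound : (∫⁻ s in Set.Ico (0:ℝ) β, ENNReal.ofReal (w (α + s)))
      ≤ ∫⁻ s in Set.Ico (0:ℝ) β, ENNReal.ofReal (w s) := by
    refine setLIntegral_mono' measurableSet_Ico fun s hs => ?_
    have hs0 : 0 ≤ s := hs.1
    have hsβ : s < β := hs.2
    have hsmem : s ∈ Iset γ := by
      refine ⟨hs0, lt_of_lt_of_le ?_ hab⟩
      calc ENNReal.ofReal s < ENNReal.ofReal β :=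
            (ENNReal.ofReal_lt_ofReal_iff (lt_of_le_of_lt hs0 hsβ)).2 hsβ
        _ = b := ENNReal.ofReal_toReal hb
        _ ≤ a + b := le_add_self
    have hαsmem : α + s ∈ Iset γ := by
      refine ⟨by linarith, lt_of_lt_of_le ?_ hab⟩
      calc ENNReal.ofReal (α + s) < ENNReal.ofReal (α + β) :=
            (ENNReal.ofReal_lt_ofReal_iff (by linarith [lt_of_le_of_lt hs0 hsβ, hα0])).2
              (by linarith)
        _ = a + b := by rw [← htr, ENNReal.ofReal_toReal habne]
    exact ENNReal.ofReal_le_ofReal (hwdec hsmem hαsmem (by linarith))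
  calc Wfun w (a + b) = ∫⁻ t in Set.Ico (0:ℝ) (α + β), ENNReal.ofReal (w t) := by
        rw [Wfun, Iset_eq_Ico habne, htr]
    _ = (∫⁻ t in Set.Ico (0:ℝ) α, ENNReal.ofReal (w t))
        + ∫⁻ t in Set.Ico α (α + β), ENNReal.ofReal (w t) := by
        rw [hsplit, lintegral_union measurableSet_Ico (Set.Ico_disjoint_Ico_same)]
    _ ≤ Wfun w a + Wfun w b := by
        refine add_le_add (le_of_eq ?_) ?_
        · rw [Wfun, Iset_eq_Ico ha]
        · rw [htrans, Wfun, Iset_eq_Ico hb]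
          exact hbound

/-- The key characterization of the decreasing rearrangement. -/
lemma lt_decRearr_iff (μ : Measure ℝ) (f : ℝ → ℝ) (t : ℝ) (l : ℝ≥0∞) :
    l < decRearr μ f t ↔ ENNReal.ofReal t < μ {s : ℝ | l < ENNReal.ofReal |f s|} := by
  constructor
  · intro h
    by_contra hc
    push_neg at hc
    exact absurd (sInf_le (by exact hc)) (not_le.2 h)
  · intro h
    rcases eq_or_ne l ∞ with rfl | hl
    · exfalso
      have : μ {s : ℝ | (∞:ℝ≥0∞) < ENNReal.ofReal |f s|} = 0 := by
        convert measure_empty (μ := μ)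
        ext s; simp
      rw [this] at h
      exact absurd h (by simp)
    -- continuity from below
    have hcup : {s : ℝ | l < ENNReal.ofReal |f s|}
        = ⋃ n : ℕ, {s : ℝ | l + (n:ℝ≥0∞)⁻¹ < ENNReal.ofReal |f s|} := by
      ext s
      simp only [Set.mem_setOf_eq, Set.mem_iUnion]
      constructor
      · intro hs
        have hsub : (0:ℝ≥0∞) < ENNReal.ofReal |f s| - l := tsub_pos_iff_lt.2 hs
        obtain ⟨n, hn⟩ := ENNReal.exists_inv_nat_lt hsub.ne'
        refine ⟨n, ?_⟩
        calc l + (n:ℝ≥0∞)⁻¹ < l + (ENNReal.ofReal |f s| - l) :=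
              ENNReal.add_lt_add_left hl hn
          _ = ENNReal.ofReal |f s| := add_tsub_cancel_of_le hs.le
      · rintro ⟨n, hn⟩
        exact lt_of_le_of_lt le_self_add hn
    have hmono : Monotone fun n : ℕ => {s : ℝ | l + (n:ℝ≥0∞)⁻¹ < ENNReal.ofReal |f s|} := by
      intro n m hnm s hs
      exact lt_of_le_of_lt (add_le_add_right (ENNReal.inv_le_inv.2 (by exact_mod_cast hnm : (n:ℝ≥0∞) ≤ m)) l) hs
    rw [hcup, Directed.measure_iUnion hmono.directed_le] at h
    obtain ⟨n, hn⟩ := lt_iSup_iff.1 h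
    have hlt : l < l + (n:ℝ≥0∞)⁻¹ :=
      ENNReal.lt_add_right hl (by simp)
    refine lt_of_lt_of_le hlt (le_sInf fun m hm => ?_)
    by_contra hcm
    push_neg at hcm
    have : μ {s : ℝ | l + (n:ℝ≥0∞)⁻¹ < ENNReal.ofReal |f s|}
        ≤ μ {s : ℝ | m < ENNReal.ofReal |f s|} :=
      measure_mono fun s hs => lt_of_le_of_lt hcm.le hs
    exact absurd (this.trans hm) (not_le.2 hn)

/-- strict monotonicity of the Orlicz function. -/
lemma phi_strictMonoOn {φ : ℝ → ℝ} (hconv : ConvexOn ℝ (Set.Ici 0) φ) (h0 : φ 0 = 0)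
    (hpos : ∀ u : ℝ, 0 < u → 0 < φ u) : StrictMonoOn φ (Set.Ici 0) := by
  intro u hu v hv huv
  have hv0 : 0 < v := lt_of_le_of_lt hu huv
  rcases eq_or_lt_of_le (Set.mem_Ici.1 hu : (0:ℝ) ≤ u) with h | h
  · rw [← h, h0]; exact hpos v hv0
  · have hb0 : 0 < u / v := div_pos h hv0
    have hb1 : u / v < 1 := (div_lt_one hv0).2 huv
    have key := hconv.2 (Set.self_mem_Ici) (le_of_lt hv0 : v ∈ Set.Ici 0)
      (by linarith : (0:ℝ) ≤ 1 - u / v) hb0.le (by ring)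
    have heq : (1 - u / v) • (0:ℝ) + (u / v) • v = u := by
      simp only [smul_eq_mul]; field_simp; ring
    rw [heq, h0, smul_eq_mul, smul_eq_mul, mul_zero, zero_add] at key
    calc φ u ≤ (u / v) * φ v := key
      _ < 1 * φ v := mul_lt_mul_of_pos_right hb1 (hpos v hv0)
      _ = φ v := one_mul _

lemma phi_surjOn {φ : ℝ → ℝ} (hconv : ConvexOn ℝ (Set.Ici 0) φ) (h0 : φ 0 = 0)
    (hpos : ∀ u : ℝ, 0 < u → 0 < φ u) : ∀ l : ℝ, 0 < l → ∃ v : ℝ, 0 ≤ v ∧ φ v = l := by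
  intro l hl
  have hsm := phi_strictMonoOn hconv h0 hpos
  have hmono : MonotoneOn φ (Set.Ici 0) := hsm.monotoneOn
  have hcont : ContinuousOn φ (Set.Ioi 0) := by
    have := hconv.continuousOn_interior
    rwa [interior_Ici] at this
  have hφ1 : 0 < φ 1 := hpos 1 one_pos
  -- the small point
  set a := min (l / (φ 1 + 1)) 1 with hadef
  have ha0 : 0 < a := lt_min (div_pos hl (by linarith)) one_pos
  have ha1 : a ≤ 1 := min_le_right _ _
  have hφa : φ a ≤ a * φ 1 := by
    have key := hconv.2 (Set.self_mem_Ici) (Set.mem_Ici.2 zero_le_one)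
      (by linarith : (0:ℝ) ≤ 1 - a) ha0.le (by ring)
    have heq : (1 - a) • (0:ℝ) + a • (1:ℝ) = a := by ring_nf
    rw [heq, h0, smul_eq_mul, smul_eq_mul, mul_zero, zero_add] at key
    simpa using key
  have hφal : φ a < l := by
    have h1 : a * φ 1 ≤ l / (φ 1 + 1) * φ 1 :=
      mul_le_mul_of_nonneg_right (min_le_left _ _) hφ1.le
    have h2 : l / (φ 1 + 1) * φ 1 < l := by
      rw [div_mul_eq_mul_div, div_lt_iff₀ (by linarith)]
      nlinarith
    linarith
  -- the large point
  obtain ⟨n, hn⟩ := exists_nat_gt (l / φ 1)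
  have hn0 : 0 < (n:ℝ) := lt_trans (div_pos hl hφ1) hn
  have hφn : l ≤ φ n := by
    have h1n : φ 1 ≤ (1 / n) * φ n := by
      have key := hconv.2 (Set.self_mem_Ici) (hn0.le : (n:ℝ) ∈ Set.Ici 0)
        (by rw [sub_nonneg, div_le_one hn0]; exact_mod_cast hn0 : (0:ℝ) ≤ 1 - 1 / n)
        (by positivity : (0:ℝ) ≤ 1 / n) (by ring)
      have heq : ((1:ℝ) - 1 / (n:ℝ)) • (0:ℝ) + ((1:ℝ) / (n:ℝ)) • (n:ℝ) = 1 := by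
        simp only [smul_eq_mul]; field_simp; ring
      rw [heq, h0, smul_eq_mul, smul_eq_mul, mul_zero, zero_add] at key
      exact key
    have : (n:ℝ) * φ 1 ≤ φ n := by
      rw [mul_comm]
      calc φ 1 * n ≤ (1 / n) * φ n * n := by nlinarith
        _ = φ n := by field_simp
    calc l ≤ (n:ℝ) * φ 1 := by
          rw [div_lt_iff₀ hφ1] at hn; linarith
      _ ≤ φ n := this
  set b := max a n with hbdef
  have hab : a ≤ b := le_max_left _ _
  have hφb : l ≤ φ b := hφn.trans (hmono hn0.le (le_trans hn0.le (le_max_right a n)) (le_max_right a n))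
  have hIcc : Set.Icc a b ⊆ Set.Ioi 0 := fun z hz => lt_of_lt_of_le ha0 hz.1
  obtain ⟨v, hv, hveq⟩ := intermediate_value_Icc hab (hcont.mono hIcc) ⟨hφal.le, hφb⟩
  exact ⟨v, le_trans ha0.le hv.1, hveq⟩

/-- The inverse characterization of `phie`. -/
lemma lt_phie_iff {φ : ℝ → ℝ} (hsm : StrictMonoOn φ (Set.Ici 0)) (h0 : φ 0 = 0)
    {l v : ℝ} (hl : 0 < l) (hv : 0 ≤ v) (hveq : φ v = l) (a : ℝ≥0∞) :
    ENNReal.ofReal l < phie φ a ↔ ENNReal.ofReal v < a := by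
  rcases eq_or_ne a ∞ with rfl | ha
  · simp [phie, ENNReal.ofReal_lt_top]
  · rw [phie, if_neg ha]
    have hat : (0:ℝ) ≤ a.toReal := ENNReal.toReal_nonneg
    constructor
    · intro h
      have h1 : l < φ a.toReal := by
        by_contra hc
        push_neg at hc
        exact absurd (ENNReal.ofReal_le_ofReal hc) (not_le.2 h)
      have h2 : v < a.toReal := by
        by_contra hc
        push_neg at hc
        have := hsm.monotoneOn hat hv hc
        rw [hveq] at this
        exact absurd h1 (not_lt.2 this)
      exact (ENNReal.ofReal_lt_iff_lt_toReal hv ha).2 h2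
    · intro h
      have h2 : v < a.toReal := (ENNReal.ofReal_lt_iff_lt_toReal hv ha).1 h
      have h1 : l < φ a.toReal := by
        rw [← hveq]
        exact hsm hv hat h2
      exact (ENNReal.ofReal_lt_ofReal_iff (lt_trans hl h1)).2 h1

/-- Layer-cake representation for a nonnegative measurable function times a weight. -/
lemma layercake (μ : Measure ℝ) [SigmaFinite μ] (F : ℝ → ℝ≥0∞) (hF : Measurable F)
    (g : ℝ → ℝ≥0∞) (hg : AEMeasurable g μ) :
    ∫⁻ t, F t * g t ∂μ
      = ∫⁻ l in Set.Ioi (0:ℝ), ∫⁻ t in {t : ℝ | ENNReal.ofReal l < F t}, g t ∂μ := by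
  have hslice : ∀ c : ℝ≥0∞, (volume.restrict (Set.Ioi (0:ℝ))) {l : ℝ | ENNReal.ofReal l < c} = c := by
    intro c
    have hms : MeasurableSet {l : ℝ | ENNReal.ofReal l < c} :=
      ENNReal.measurable_ofReal measurableSet_Iio
    rw [Measure.restrict_apply hms]
    rcases eq_or_ne c ∞ with rfl | hc
    · have : {l : ℝ | ENNReal.ofReal l < ∞} ∩ Set.Ioi 0 = Set.Ioi 0 := by
        ext l; simp [ENNReal.ofReal_lt_top]
      rw [this]; simp
    · have : {l : ℝ | ENNReal.ofReal l < c} ∩ Set.Ioi 0 = Set.Ioo 0 c.toReal := by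
        ext l
        simp only [Set.mem_inter_iff, Set.mem_setOf_eq, Set.mem_Ioi, Set.mem_Ioo]
        constructor
        · rintro ⟨h1, h2⟩
          exact ⟨h2, (ENNReal.ofReal_lt_iff_lt_toReal h2.le hc).1 h1⟩
        · rintro ⟨h1, h2⟩
          exact ⟨(ENNReal.ofReal_lt_iff_lt_toReal h1.le hc).2 h2, h1⟩
      rw [this, Real.volume_Ioo, sub_zero, ENNReal.ofReal_toReal hc]
  set S : Set (ℝ × ℝ) := {p : ℝ × ℝ | ENNReal.ofReal p.2 < F p.1} with hSdef
  have hS : MeasurableSet S :=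
    measurableSet_lt (ENNReal.measurable_ofReal.comp measurable_snd) (hF.comp measurable_fst)
  have hG : AEMeasurable (fun p : ℝ × ℝ => S.indicator (fun q : ℝ × ℝ => g q.1) p)
      (μ.prod (volume.restrict (Set.Ioi (0:ℝ)))) :=
    (AEMeasurable.comp_fst hg).indicator hS
  have hswap := lintegral_lintegral_swap (μ := μ) (ν := volume.restrict (Set.Ioi (0:ℝ)))
    (f := fun t l => S.indicator (fun q : ℝ × ℝ => g q.1) (t, l)) (by exact hG)
  calc ∫⁻ t, F t * g t ∂μ
      = ∫⁻ t, (∫⁻ l in Set.Ioi (0:ℝ), S.indicator (fun q : ℝ × ℝ => g q.1) (t, l)) ∂μ := by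
        refine lintegral_congr fun t => ?_
        have hrw : (fun l : ℝ => S.indicator (fun q : ℝ × ℝ => g q.1) (t, l))
            = fun l : ℝ => ({l : ℝ | ENNReal.ofReal l < F t}.indicator (fun _ => g t) l) := by
          funext l
          simp [Set.indicator_apply, hSdef, Set.mem_setOf_eq]
        rw [hrw, lintegral_indicator (s := {l : ℝ | ENNReal.ofReal l < F t})
            (by exact ENNReal.measurable_ofReal measurableSet_Iio) _,
          setLIntegral_const, hslice (F t), mul_comm]
    _ = ∫⁻ l in Set.Ioi (0:ℝ), ∫⁻ t, S.indicator (fun q : ℝ × ℝ => g q.1) (t, l) ∂μ := by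
        simpa using hswap
    _ = ∫⁻ l in Set.Ioi (0:ℝ), ∫⁻ t in {t : ℝ | ENNReal.ofReal l < F t}, g t ∂μ := by
        refine lintegral_congr fun l => ?_
        have hrw : (fun t : ℝ => S.indicator (fun q : ℝ × ℝ => g q.1) (t, l))
            = fun t : ℝ => ({t : ℝ | ENNReal.ofReal l < F t}.indicator g t) := by
          funext t
          simp [Set.indicator_apply, hSdef, Set.mem_setOf_eq]
        rw [hrw, lintegral_indicator (s := {t : ℝ | ENNReal.ofReal l < F t})
            (by exact hF measurableSet_Ioi) _]

/-- The layer-cake representation of the Orlicz-Lorentz modular: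
`ρ(f) = ∫_0^∞ W(d_f(φ⁻¹(l))) dl` where `d_f` is the distribution function of `|f|`
and `W(a) = ∫_{[0,a)} w`. -/
lemma rep (γ : ℝ≥0∞) (φ w : ℝ → ℝ) (hsm : StrictMonoOn φ (Set.Ici 0)) (h0 : φ 0 = 0)
    (hwdec : AntitoneOn w (Iset γ)) (u : ℝ → ℝ)
    (hu : ∀ l : ℝ, 0 < l → 0 ≤ u l ∧ φ (u l) = l)
    (f : ℝ → ℝ) (hf : Measurable f) :
    olModular γ φ w f = ∫⁻ l in Set.Ioi (0:ℝ),
      Wfun w ((volume.restrict (Iset γ))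
        {s : ℝ | ENNReal.ofReal (u l) < ENNReal.ofReal |f s|}) := by
  have hphiemono : Monotone (phie φ) := by
    intro a b hab
    rcases eq_or_ne b ∞ with rfl | hb
    · simp [phie]
    have ha : a ≠ ∞ := fun h => hb (top_le_iff.1 (h ▸ hab))
    rw [phie, if_neg ha, phie, if_neg hb]
    exact ENNReal.ofReal_le_ofReal
      (hsm.monotoneOn ENNReal.toReal_nonneg ENNReal.toReal_nonneg (ENNReal.toReal_mono hb hab))
  have hFanti : Antitone fun t => phie φ (decRearr (volume.restrict (Iset γ)) f t) := by
    intro t₁ t₂ h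
    refine hphiemono (sInf_le_sInf fun m hm => ?_)
    exact le_trans hm (ENNReal.ofReal_le_ofReal h)
  have hF : Measurable fun t => phie φ (decRearr (volume.restrict (Iset γ)) f t) :=
    hFanti.measurable
  have hwae : AEMeasurable (fun t => ENNReal.ofReal (w t)) (volume.restrict (Iset γ)) :=
    (aemeasurable_restrict_of_antitoneOn (measurableSet_Iset γ) hwdec).ennreal_ofReal
  calc olModular γ φ w f
      = ∫⁻ l in Set.Ioi (0:ℝ),
          ∫⁻ t in {t : ℝ | ENNReal.ofReal l
              < phie φ (decRearr (volume.restrict (Iset γ)) f t)},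
            ENNReal.ofReal (w t) ∂(volume.restrict (Iset γ)) :=
        layercake (volume.restrict (Iset γ)) _ hF _ hwae
    _ = ∫⁻ l in Set.Ioi (0:ℝ),
          Wfun w ((volume.restrict (Iset γ))
            {s : ℝ | ENNReal.ofReal (u l) < ENNReal.ofReal |f s|}) := by
        refine setLIntegral_congr_fun measurableSet_Ioi
          (fun l hl => ?_)
        obtain ⟨hu0, hueq⟩ := hu l hl
        have hDγ : (volume.restrict (Iset γ))
            {s : ℝ | ENNReal.ofReal (u l) < ENNReal.ofReal |f s|} ≤ γ := by
          calc (volume.restrict (Iset γ)) _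
              ≤ (volume.restrict (Iset γ)) Set.univ := measure_mono (Set.subset_univ _)
            _ = volume (Iset γ) := Measure.restrict_apply_univ _
            _ = γ := volume_Iset γ
        have hset : {t : ℝ | ENNReal.ofReal l
              < phie φ (decRearr (volume.restrict (Iset γ)) f t)} ∩ Iset γ
            = Iset ((volume.restrict (Iset γ))
                {s : ℝ | ENNReal.ofReal (u l) < ENNReal.ofReal |f s|}) := by
          ext t
          simp only [Set.mem_inter_iff, Set.mem_setOf_eq, Iset]
          constructor
          · rintro ⟨h1, ht0, _⟩
            refine ⟨ht0, ?_⟩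
            rw [lt_phie_iff hsm h0 hl hu0 hueq] at h1
            exact (lt_decRearr_iff (volume.restrict (Iset γ)) f t _).1 h1
          · rintro ⟨ht0, htD⟩
            refine ⟨?_, ht0, lt_of_lt_of_le htD hDγ⟩
            rw [lt_phie_iff hsm h0 hl hu0 hueq]
            exact (lt_decRearr_iff (volume.restrict (Iset γ)) f t _).2 htD
        have hSm : MeasurableSet {t : ℝ | ENNReal.ofReal l
            < phie φ (decRearr (volume.restrict (Iset γ)) f t)} :=
          hF measurableSet_Ioi
        rw [Measure.restrict_restrict hSm, hset]
        rfl

end OLAux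

/-- The Orlicz-Lorentz modular is orthogonally subadditive: for disjointly supported
`x, y` we have `ρ(x+y) ≤ ρ(x) + ρ(y)`. -/
theorem olModular_orthogonally_subadditive (γ : ℝ≥0∞) (hγ : 0 < γ)
    (φ : ℝ → ℝ) (hconv : ConvexOn ℝ (Set.Ici 0) φ) (h0 : φ 0 = 0)
    (hpos : ∀ u : ℝ, 0 < u → 0 < φ u)
    (w : ℝ → ℝ) (hw : ∀ s ∈ Iset γ, 0 < w s) (hwdec : AntitoneOn w (Iset γ))
    (hwloc : ∀ b : ℝ, 0 ≤ b → ENNReal.ofReal b < γ → IntegrableOn w (Set.Ico 0 b))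
    (x y : ℝ → ℝ) (hx : Measurable x) (hy : Measurable y)
    (hdisj : ∀ s : ℝ, min |x s| |y s| = 0) :
    olModular γ φ w (fun s => x s + y s)
      ≤ olModular γ φ w x + olModular γ φ w y := by
  classical
  have hsm := OLAux.phi_strictMonoOn hconv h0 hpos
  have hsurj := OLAux.phi_surjOn hconv h0 hpos
  obtain ⟨u, hu⟩ : ∃ u : ℝ → ℝ, ∀ l : ℝ, 0 < l → 0 ≤ u l ∧ φ (u l) = l := by
    choose v hv using hsurj
    exact ⟨fun l => if h : 0 < l then v l h else 0,
      fun l hl => by simpa only [dif_pos hl] using hv l hl⟩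
  have hrepz := OLAux.rep γ φ w hsm h0 hwdec u hu (fun s => x s + y s) (hx.add hy)
  have hrepx := OLAux.rep γ φ w hsm h0 hwdec u hu x hx
  have hrepy := OLAux.rep γ φ w hsm h0 hwdec u hu y hy
  -- additivity of the distribution function for disjointly supported functions
  have hdadd : ∀ c : ℝ≥0∞,
      (volume.restrict (Iset γ)) {s : ℝ | c < ENNReal.ofReal |x s + y s|}
        = (volume.restrict (Iset γ)) {s : ℝ | c < ENNReal.ofReal |x s|}
          + (volume.restrict (Iset γ)) {s : ℝ | c < ENNReal.ofReal |y s|} := by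
    intro c
    have hzero : ∀ s : ℝ, |x s| = 0 ∨ |y s| = 0 := by
      intro s
      have := hdisj s
      rcases le_total |x s| |y s| with h | h
      · left; rw [min_eq_left h] at this; exact this
      · right; rw [min_eq_right h] at this; exact this
    have hun : {s : ℝ | c < ENNReal.ofReal |x s + y s|}
        = {s : ℝ | c < ENNReal.ofReal |x s|} ∪ {s : ℝ | c < ENNReal.ofReal |y s|} := by
      ext s
      have habs : ENNReal.ofReal |x s + y s|
          = max (ENNReal.ofReal |x s|) (ENNReal.ofReal |y s|) := by
        rcases hzero s with h | h
        · have hx0 : x s = 0 := abs_eq_zero.1 h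
          rw [h, hx0, zero_add]
          simp
        · have hy0 : y s = 0 := abs_eq_zero.1 h
          rw [h, hy0, add_zero]
          simp
      simp only [Set.mem_setOf_eq, Set.mem_union, habs, lt_max_iff]
    have hdisjset : Disjoint {s : ℝ | c < ENNReal.ofReal |x s|}
        {s : ℝ | c < ENNReal.ofReal |y s|} := by
      rw [Set.disjoint_left]
      intro s hs1 hs2
      rcases hzero s with h | h
      · rw [Set.mem_setOf_eq, h] at hs1
        simp at hs1
      · rw [Set.mem_setOf_eq, h] at hs2
        simp at hs2
    have hmy : MeasurableSet {s : ℝ | c < ENNReal.ofReal |y s|} :=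
      (hy.abs.ennreal_ofReal) measurableSet_Ioi
    rw [hun, measure_union hdisjset hmy]
  -- monotonicity of the inverse
  have humono : ∀ l₁ l₂ : ℝ, 0 < l₁ → 0 < l₂ → l₁ ≤ l₂ → u l₁ ≤ u l₂ := by
    intro l₁ l₂ h₁ h₂ h12
    by_contra hc
    push_neg at hc
    have := hsm (hu l₂ h₂).1 (hu l₁ h₁).1 hc
    rw [(hu l₂ h₂).2, (hu l₁ h₁).2] at this
    exact absurd h12 (not_le.2 this)
  have hantiX : AntitoneOn (fun l : ℝ => OLAux.Wfun w
      ((volume.restrict (Iset γ)) {s : ℝ | ENNReal.ofReal (u l) < ENNReal.ofReal |x s|}))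
      (Set.Ioi (0:ℝ)) := by
    intro l₁ h₁ l₂ h₂ h12
    refine OLAux.Wfun_mono w (measure_mono fun s hs => ?_)
    exact lt_of_le_of_lt (ENNReal.ofReal_le_ofReal (humono l₁ l₂ h₁ h₂ h12)) hs
  have hAEx : AEMeasurable (fun l : ℝ => OLAux.Wfun w
      ((volume.restrict (Iset γ)) {s : ℝ | ENNReal.ofReal (u l) < ENNReal.ofReal |x s|}))
      (volume.restrict (Set.Ioi (0:ℝ))) :=
    aemeasurable_restrict_of_antitoneOn measurableSet_Ioi hantiX
  rw [hrepz, hrepx, hrepy]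
  calc ∫⁻ l in Set.Ioi (0:ℝ), OLAux.Wfun w ((volume.restrict (Iset γ))
          {s : ℝ | ENNReal.ofReal (u l) < ENNReal.ofReal |x s + y s|})
      ≤ ∫⁻ l in Set.Ioi (0:ℝ),
          (OLAux.Wfun w ((volume.restrict (Iset γ))
            {s : ℝ | ENNReal.ofReal (u l) < ENNReal.ofReal |x s|})
          + OLAux.Wfun w ((volume.restrict (Iset γ))
            {s : ℝ | ENNReal.ofReal (u l) < ENNReal.ofReal |y s|})) := by
        refine setLIntegral_mono' measurableSet_Ioi fun l _ => ?_
        rw [hdadd (ENNReal.ofReal (u l))]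
        refine OLAux.Wfun_subadd hwdec ?_
        rw [← hdadd (ENNReal.ofReal (u l))]
        calc (volume.restrict (Iset γ)) _
            ≤ (volume.restrict (Iset γ)) Set.univ := measure_mono (Set.subset_univ _)
          _ = volume (Iset γ) := Measure.restrict_apply_univ _
          _ = γ := OLAux.volume_Iset γ
    _ = (∫⁻ l in Set.Ioi (0:ℝ), OLAux.Wfun w ((volume.restrict (Iset γ))
            {s : ℝ | ENNReal.ofReal (u l) < ENNReal.ofReal |x s|}))
        + ∫⁻ l in Set.Ioi (0:ℝ), OLAux.Wfun w ((volume.restrict (Iset γ))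
            {s : ℝ | ENNReal.ofReal (u l) < ENNReal.ofReal |y s|}) :=
        lintegral_add_left' hAEx _
end
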